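/- Let f be a convex differentiable function on ℝ^n, g₁,…,g_m convex differentiable functions, x* ∈ K = {x : gᵢ(x) ≤ 0 ∀i}, and λ* ∈ ℝ₊^m. If ∇f(x*) + Σᵢ λᵢ*∇gᵢ(x*) = 0 and λᵢ* gᵢ(x*) = 0 for each i, then (x*, λ*) is a saddle-point of the Lagrangian L(x,λ) = f(x) + Σᵢ λᵢgᵢ(x), i.e., L(x, λ*) ≥ L(x*, λ*) ≥ L(x*, λ) for all x ∈ ℝ^n, λ ∈ ℝ₊^m. -/

import Mathlib

/-- Gradient inequality for a convex differentiable function on ℝⁿ. -/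
lemma convex_grad_ineq {n : ℕ} (F : (Fin n → ℝ) → ℝ)
    (hc : ConvexOn ℝ Set.univ F) (hd : Differentiable ℝ F)
    (x y : Fin n → ℝ) :
    F x + fderiv ℝ F x (y - x) ≤ F y := by
  set φ : ℝ → ℝ := fun t => F (x + t • (y - x)) with hφ
  have haff : ConvexOn ℝ Set.univ φ := by
    have := hc.comp_affineMap
      (AffineMap.const ℝ ℝ x + (LinearMap.toSpanSingleton ℝ _ (y - x)).toAffineMap)
    simpa [φ, Set.preimage_univ, Function.comp_def, LinearMap.toSpanSingleton_apply] using this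
  have hline : HasDerivAt (fun t : ℝ => x + t • (y - x)) (y - x) 0 := by
    simpa using ((hasDerivAt_id (0:ℝ)).smul_const (y - x)).const_add x
  have hder : HasDerivAt φ (fderiv ℝ F x (y - x)) 0 := by
    have hx0 : x + (0:ℝ) • (y - x) = x := by simp
    have hF : HasFDerivAt F (fderiv ℝ F x) (x + (0:ℝ) • (y - x)) := by
      rw [hx0]; exact (hd x).hasFDerivAt
    have := hF.comp_hasDerivAt 0 hline
    simpa [φ, Function.comp_def] using this
  have hslope := haff.le_slope_of_hasDerivAt (S := Set.univ) (Set.mem_univ 0)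
    (Set.mem_univ 1) one_pos hder
  have : fderiv ℝ F x (y - x) ≤ φ 1 - φ 0 := by
    simpa [slope, φ] using hslope
  have h0 : φ 0 = F x := by simp [φ]
  have h1 : φ 1 = F y := by simp [φ]
  linarith [this, h0.symm ▸ h1.symm ▸ this]

/-- KKT conditions imply a saddle-point of the Lagrangian for convex differentiable data. -/
theorem kkt_implies_saddle_point {n m : ℕ}
    (f : (Fin n → ℝ) → ℝ) (g : Fin m → (Fin n → ℝ) → ℝ)
    (hfc : ConvexOn ℝ Set.univ f) (hgc : ∀ i, ConvexOn ℝ Set.univ (g i))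
    (hfd : Differentiable ℝ f) (hgd : ∀ i, Differentiable ℝ (g i))
    (K : Set (Fin n → ℝ)) (hK : K = {x | ∀ i, g i x ≤ 0})
    (xs : Fin n → ℝ) (hxs : xs ∈ K)
    (lams : Fin m → ℝ) (hlams : ∀ i, 0 ≤ lams i)
    (hgrad : fderiv ℝ f xs + ∑ i, lams i • fderiv ℝ (g i) xs = 0)
    (hcomp : ∀ i, lams i * g i xs = 0)
    (L : (Fin n → ℝ) → (Fin m → ℝ) → ℝ)
    (hL : ∀ x lam, L x lam = f x + ∑ i, lam i * g i x) :
    (∀ x : Fin n → ℝ, L x lams ≥ L xs lams) ∧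
      (∀ lam : Fin m → ℝ, (∀ i, 0 ≤ lam i) → L xs lams ≥ L xs lam) := by
  have hgxs : ∀ i, g i xs ≤ 0 := by rw [hK] at hxs; exact hxs
  constructor
  · -- first inequality
    set F : (Fin n → ℝ) → ℝ := fun x => f x + ∑ i, lams i * g i x with hF
    have hFc : ConvexOn ℝ Set.univ F := by
      apply hfc.add
      have : ∀ i ∈ Finset.univ, ConvexOn ℝ (Set.univ : Set (Fin n → ℝ))
          (fun x => lams i * g i x) := by
        intro i _
        simpa [smul_eq_mul] using (hgc i).smul (hlams i)
      have hs := Finset.univ.sum_induction _ (fun h => ConvexOn ℝ Set.univ h)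
        (fun a b ha hb => ha.add hb) (convexOn_const 0 convex_univ) this
      convert hs using 1
      ext x
      simp [Finset.sum_apply]
    have hFd : Differentiable ℝ F := by
      apply hfd.add
      apply Differentiable.fun_sum
      intro i _
      exact (hgd i).const_mul _
    have hFderiv : fderiv ℝ F xs = 0 := by
      have h1 : fderiv ℝ F xs
          = fderiv ℝ f xs + ∑ i, lams i • fderiv ℝ (g i) xs := by
        rw [hF]
        rw [fderiv_fun_add (hfd xs)
          ((Differentiable.fun_sum (fun i (_ : i ∈ Finset.univ) => (hgd i).const_mul (lams i))) xs)]
        congr 1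
        rw [fderiv_fun_sum (fun i _ => ((hgd i).const_mul (lams i)) xs)]
        apply Finset.sum_congr rfl
        intro i _
        exact fderiv_const_mul ((hgd i) xs) (lams i)
      rw [h1, hgrad]
    intro x
    have := convex_grad_ineq F hFc hFd xs x
    rw [hFderiv] at this
    simp only [ContinuousLinearMap.zero_apply, add_zero] at this
    rw [hL x lams, hL xs lams]
    exact this
  · -- second inequality
    intro lam hlam
    rw [hL xs lams, hL xs lam]
    have h1 : ∑ i, lams i * g i xs = 0 := by
      simp [hcomp]
    have h2 : ∑ i, lam i * g i xs ≤ 0 := by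
      apply Finset.sum_nonpos
      intro i _
      exact mul_nonpos_of_nonneg_of_nonpos (hlam i) (hgxs i)
    linarith
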